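/- Let d > 1 be a squarefree integer, K = ℚ(√d), and let u > 1 be the fundamental unit of K; write u² = u₁ + u₂√d with rationals u₁, u₂ > 0. Then a totally positive element a = a₁ + a₂√d (a₁, a₂ ∈ ℚ) is reduced, i.e., Tr(a) ≤ Tr(a v²) for all v ∈ O_K^×, if and only if |a₂|/a₁ ≤ (u₁ − 1)/(d·u₂). -/

import Mathlib

open NumberField Module

open Polynomial in
private lemma auxKey (P Q E : ℝ) (hP : 0 < P) (hQ : 0 < Q) (hE : 1 < E)
    (h1 : Q ≤ P * E) (k : ℤ) (hk : 0 ≤ k) :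
    P + Q ≤ P * E ^ k + Q * E ^ (-k) := by
  rcases eq_or_lt_of_le hk with h | h
  · simp [← h]
  · have hE0 : (0:ℝ) < E := lt_trans one_pos hE
    have h2 : E ^ (-k) ≤ E ^ (-1 : ℤ) := zpow_le_zpow_right₀ hE.le (by omega)
    have h3 : (1:ℝ) ≤ E ^ k := one_le_zpow₀ hE.le hk
    have h4 : E ^ k * E ^ (-k) = 1 := by
      rw [← zpow_add₀ (ne_of_gt hE0)]; simp
    have h5 : E * E⁻¹ = 1 := mul_inv_cancel₀ (ne_of_gt hE0)
    have h6 : E ^ (-1 : ℤ) = E⁻¹ := zpow_neg_one E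
    have h7 : Q * E ^ (-k) ≤ P := by
      have h8 : Q * E ^ (-k) ≤ Q * E⁻¹ := by
        rw [← h6]; exact mul_le_mul_of_nonneg_left h2 hQ.le
      have h9 : Q * E⁻¹ ≤ P := by
        have h10 := mul_le_mul_of_nonneg_right h1 (inv_nonneg.mpr hE0.le)
        rwa [mul_assoc, h5, mul_one] at h10
      linarith
    nlinarith [mul_nonneg (sub_nonneg.mpr h3) (sub_nonneg.mpr h7), h4]

private lemma auxKey2 (P Q E : ℝ) (hP : 0 < P) (hQ : 0 < Q) (hE : 1 < E)
    (h1 : Q ≤ P * E) (h2 : P ≤ Q * E) (k : ℤ) :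
    P + Q ≤ P * E ^ k + Q * E ^ (-k) := by
  rcases le_total 0 k with hk | hk
  · exact auxKey P Q E hP hQ hE h1 k hk
  · have h := auxKey Q P E hQ hP hE h2 (-k) (by omega)
    rw [neg_neg] at h
    linarith

private lemma auxIff (P Q E F : ℝ) (hP : 0 < P) (hQ : 0 < Q) (hE : 1 < E)
    (hEF : E * F = 1) :
    (P - Q) * (E - F) ≤ (P + Q) * (E + F - 2) ↔ P ≤ Q * E := by
  have hE0 : (0:ℝ) < E := by linarith
  have hF : 0 < F := by nlinarith
  have e : 2*((E-1)*(Q-P*F)) =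
      (P+Q)*(E+F-2) - (P-Q)*(E-F) - 2*P*(E*F) + 2*P := by ring
  rw [hEF] at e
  constructor
  · intro h
    have h1 : 0 ≤ (E - 1) * (Q - P * F) := by linarith
    have h2 : P * F ≤ Q := by
      by_contra hc
      push_neg at hc
      nlinarith [h1]
    have h3 := mul_le_mul_of_nonneg_right h2 hE0.le
    calc P = P * F * E := by rw [mul_assoc, mul_comm F E, hEF, mul_one]
    _ ≤ Q * E := h3
  · intro h
    have h2 : P * F ≤ Q := by
      have h3 := mul_le_mul_of_nonneg_right h hF.le
      calc P * F ≤ Q * E * F := h3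
      _ = Q := by rw [mul_assoc, hEF, mul_one]
    have h4 : 0 ≤ (E - 1) * (Q - P * F) :=
      mul_nonneg (by linarith) (by linarith)
    linarith

private lemma auxDerive (P Q E F : ℝ) (hP : 0 < P) (hQ : 0 < Q) (hE : 1 < E)
    (hEF : E * F = 1) (h : P + Q ≤ P * E + Q * F) : Q ≤ P * E := by
  have hE0 : (0:ℝ) < E := by linarith
  have e : (E - 1) * (P * E - Q) =
      E * (P * E + Q * F - P - Q) - Q * (E * F) + Q := by ring
  rw [hEF] at e
  have hx : 0 ≤ P * E + Q * F - P - Q := by linarith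
  have h2 := mul_nonneg hE0.le hx
  have h3 : 0 ≤ (E - 1) * (P * E - Q) := by linarith
  by_contra hc
  push_neg at hc
  nlinarith [h3, hE]

/-- An element of a number field is totally positive if it is positive under
every real embedding. -/
def TotPos {K : Type*} [Field K] (a : K) : Prop := ∀ τ : K →+* ℝ, 0 < τ a

set_option maxHeartbeats 1000000 in
open Polynomial in
theorem stmt6 (d : ℤ) (hd1 : 1 < d) (hdsf : Squarefree d)
    (K : Type*) [Field K] [NumberField K] (sq : K)
    (hsq : sq ^ 2 = (d : K)) (hdeg : finrank ℚ K = 2)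
    -- a real embedding of `K`
    (τ₀ : K →+* ℝ)
    -- `u` is the fundamental unit: `u > 1` and `O_K^×` is generated by `u` and `-1`
    (u : (𝓞 K)ˣ) (hu1 : 1 < τ₀ ((u : 𝓞 K) : K))
    (hfund : ∀ v : (𝓞 K)ˣ, ∃ k : ℤ,
      ((v : 𝓞 K) : K) = ((u : 𝓞 K) : K) ^ k ∨ ((v : 𝓞 K) : K) = -((u : 𝓞 K) : K) ^ k)
    -- `u² = u₁ + u₂√d` with `u₁, u₂ > 0` rational
    (u₁ u₂ : ℚ) (hu₁ : 0 < u₁) (hu₂ : 0 < u₂)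
    (husq : ((u : 𝓞 K) : K) ^ 2 = (u₁ : K) + (u₂ : K) * sq)
    -- a totally positive element `a = a₁ + a₂√d`
    (a : K) (a₁ a₂ : ℚ) (haK : a = (a₁ : K) + (a₂ : K) * sq) (ha : TotPos a) :
    (∀ v : (𝓞 K)ˣ,
        Algebra.trace ℚ K a ≤ Algebra.trace ℚ K (a * ((v : 𝓞 K) : K) ^ 2)) ↔
      |a₂| / a₁ ≤ (u₁ - 1) / ((d : ℚ) * u₂) := by
  -- `d` is not the square of a rational
  have hdq : ∀ q : ℚ, q ^ 2 ≠ (d : ℚ) := by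
    intro q hq
    have hqint : IsIntegral ℤ q := by
      refine ⟨X ^ 2 - C d, monic_X_pow_sub_C d two_ne_zero, ?_⟩
      rw [eval₂_sub, eval₂_pow, eval₂_X, eval₂_C, eq_intCast]
      linear_combination hq
    obtain ⟨n, hn⟩ := IsIntegrallyClosed.isIntegral_iff.mp hqint
    have hn' : (n : ℚ) = q := by rw [← hn]; simp
    rw [← hn'] at hq
    have hnn : n * n = d := by
      have h0 : ((n * n : ℤ) : ℚ) = ((d : ℤ) : ℚ) := by push_cast; linear_combination hq
      exact_mod_cast h0
    have hun := hdsf n (dvd_of_eq hnn)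
    rcases Int.isUnit_iff.mp hun with h | h <;> rw [h] at hnn <;> norm_num at hnn <;> omega
  have hd0 : (d : K) ≠ 0 := Int.cast_ne_zero.mpr (by omega)
  have hsq0 : sq ≠ 0 := by
    intro h
    apply hd0
    rw [← hsq, h]; ring
  -- the power basis generated by `sq`
  have hli : LinearIndependent ℚ (fun i : Fin 2 => sq ^ (i : ℕ)) := by
    have hfe : (fun i : Fin 2 => sq ^ (i : ℕ)) = ![1, sq] := by
      funext i; fin_cases i <;> simp
    rw [hfe, linearIndependent_fin2]
    refine ⟨hsq0, fun t ht => ?_⟩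
    simp only [Matrix.cons_val_one, Matrix.head_cons, Matrix.cons_val_zero] at ht
    rw [Rat.smul_def] at ht
    have h2 : ((t ^ 2 * d : ℚ) : K) = 1 := by
      push_cast
      rw [← hsq]
      linear_combination ((t : K) * sq + 1) * ht
    have h3 : t ^ 2 * d = 1 := by exact_mod_cast h2
    have ht0 : t ≠ 0 := by
      intro h; rw [h] at h3; simp at h3
    apply hdq t⁻¹
    field_simp
    linear_combination -h3
  have hcard : Fintype.card (Fin 2) = finrank ℚ K := by simp [hdeg]
  let pb : PowerBasis ℚ K :=
    { gen := sq
      dim := 2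
      basis := basisOfLinearIndependentOfCardEqFinrank hli hcard
      basis_eq_pow := fun i =>
        congrFun (coe_basisOfLinearIndependentOfCardEqFinrank hli hcard) i }
  have hpbgen : pb.gen = sq := rfl
  -- the minimal polynomial of `sq`
  have hminpoly : minpoly ℚ sq = X ^ 2 - C (d : ℚ) := by
    have hmon : (X ^ 2 - C (d : ℚ)).Monic := monic_X_pow_sub_C _ two_ne_zero
    have haev : (Polynomial.aeval sq) (X ^ 2 - C (d : ℚ)) = 0 := by
      rw [map_sub, map_pow, aeval_X, aeval_C]
      rw [hsq]
      simp
    have hdvd : minpoly ℚ sq ∣ X ^ 2 - C (d : ℚ) := minpoly.dvd ℚ sq haev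
    have hnd : (minpoly ℚ sq).natDegree = 2 := by
      have := pb.natDegree_minpoly
      rwa [hpbgen] at this
    exact (Polynomial.eq_of_monic_of_dvd_of_natDegree_le
      (minpoly.monic (IsIntegral.of_finite ℚ sq)) hmon hdvd
      (by rw [hnd, natDegree_X_pow_sub_C])).symm
  -- traces of rationals and of `sq`
  have htrQ : ∀ q : ℚ, Algebra.trace ℚ K ((q : K)) = 2 * q := by
    intro q
    rw [show ((q : K)) = algebraMap ℚ K q from (eq_ratCast (algebraMap ℚ K) q).symm,
      Algebra.trace_algebraMap, hdeg]
    rw [nsmul_eq_mul]; norm_num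
  have htrsq : Algebra.trace ℚ K sq = 0 := by
    have h := PowerBasis.trace_gen_eq_nextCoeff_minpoly pb
    rw [hpbgen, hminpoly] at h
    rw [h]
    rw [nextCoeff, natDegree_X_pow_sub_C]
    simp only [coeff_sub, coeff_X_pow, coeff_C]
    norm_num
  -- the conjugation automorphism `σ` with `σ sq = -sq`
  have haev' : (Polynomial.aeval (-sq)) (minpoly ℚ pb.gen) = 0 := by
    rw [hpbgen, hminpoly, map_sub, map_pow, aeval_X, aeval_C, neg_pow, hsq]
    simp
  let σ : K →ₐ[ℚ] K := pb.lift (-sq) haev'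
  have hσsq : σ sq = -sq := pb.lift_gen (-sq) haev'
  let τ₁ : K →+* ℝ := τ₀.comp σ.toRingHom
  have hτ₁sq : τ₁ sq = -τ₀ sq := by
    show τ₀ (σ sq) = -τ₀ sq
    rw [hσsq, map_neg]
  -- the trace over ℝ is the sum of the two embeddings
  have htrace : ∀ x : K, ((Algebra.trace ℚ K x : ℚ) : ℝ) = τ₀ x + τ₁ x := by
    have hext : (Algebra.linearMap ℚ ℝ).comp (Algebra.trace ℚ K) =
        τ₀.toRatAlgHom.toLinearMap + τ₁.toRatAlgHom.toLinearMap := by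
      apply Basis.ext pb.basis
      intro i
      rw [pb.basis_eq_pow]
      obtain ⟨iv, hiv⟩ := i
      have hiv' : iv < 2 := hiv
      interval_cases iv
      · show (Algebra.linearMap ℚ ℝ) (Algebra.trace ℚ K (sq ^ (0 : ℕ)))
          = τ₀ (sq ^ (0 : ℕ)) + τ₁ (sq ^ (0 : ℕ))
        rw [pow_zero]
        rw [show (1 : K) = ((1 : ℚ) : K) by norm_num, htrQ]
        simp
        norm_num
      · show (Algebra.linearMap ℚ ℝ) (Algebra.trace ℚ K (sq ^ (1 : ℕ)))
          = τ₀ (sq ^ (1 : ℕ)) + τ₁ (sq ^ (1 : ℕ))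
        rw [pow_one, htrsq, hτ₁sq]
        simp
    intro x
    have h := LinearMap.congr_fun hext x
    simp only [LinearMap.comp_apply, LinearMap.add_apply, AlgHom.toLinearMap_apply,
      Algebra.linearMap_apply] at h
    rw [show (algebraMap ℚ ℝ) (Algebra.trace ℚ K x) = ((Algebra.trace ℚ K x : ℚ) : ℝ) from
      eq_ratCast (algebraMap ℚ ℝ) _] at h
    exact h
  -- units and the norm computation
  set w : K := ((u : 𝓞 K) : K) with hwdef
  set w' : K := (((u⁻¹ : (𝓞 K)ˣ) : 𝓞 K) : K) with hw'def
  have hww' : w * w' = 1 := by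
    rw [hwdef, hw'def, RingOfIntegers.coe_eq_algebraMap, RingOfIntegers.coe_eq_algebraMap,
      ← map_mul, Units.mul_inv, map_one]
  have hw0 : w ≠ 0 := left_ne_zero_of_mul_eq_one hww'
  have hwint : IsIntegral ℤ w := RingOfIntegers.isIntegral_coe (u : 𝓞 K)
  have hw'int : IsIntegral ℤ w' := RingOfIntegers.isIntegral_coe ((u⁻¹ : (𝓞 K)ˣ) : 𝓞 K)
  have hσwint : IsIntegral ℤ (σ w) := map_isIntegral_int σ.toRingHom hwint
  have hσw'int : IsIntegral ℤ (σ w') := map_isIntegral_int σ.toRingHom hw'int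
  set N : ℚ := u₁ ^ 2 - (d : ℚ) * u₂ ^ 2 with hNdef
  have hσw2 : σ (w ^ 2) = (u₁ : K) - (u₂ : K) * sq := by
    rw [husq, map_add, map_mul, hσsq, map_ratCast, map_ratCast]
    ring
  have htN : (w * σ w) ^ 2 = ((N : ℚ) : K) := by
    have h1 : (w * σ w) ^ 2 = w ^ 2 * σ (w ^ 2) := by rw [map_pow]; ring
    rw [h1, hσw2, husq, hNdef]
    push_cast
    linear_combination (-(u₂ : K) ^ 2) * hsq
  have htt' : (w * σ w) * (w' * σ w') = 1 := by
    have h1 : (w * σ w) * (w' * σ w') = (w * w') * σ (w * w') := by rw [map_mul]; ring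
    rw [h1, hww', map_one, mul_one]
  have ht0 : w * σ w ≠ 0 := left_ne_zero_of_mul_eq_one htt'
  have hN0 : N ≠ 0 := by
    intro h
    rw [h] at htN
    simp only [Rat.cast_zero] at htN
    exact ht0 (pow_eq_zero_iff two_ne_zero |>.mp htN)
  have hratint : ∀ q : ℚ, IsIntegral ℤ ((q : K)) → ∃ n : ℤ, (n : ℚ) = q := by
    intro q hq
    have h1 : IsIntegral ℤ (((algebraMap ℚ K).toIntAlgHom) q) := by
      have h0 : ((algebraMap ℚ K).toIntAlgHom) q = ((q : K)) := eq_ratCast (algebraMap ℚ K) q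
      rwa [h0]
    have h2 : IsIntegral ℤ q :=
      (isIntegral_algHom_iff ((algebraMap ℚ K).toIntAlgHom)
        (algebraMap ℚ K).injective).mp h1
    obtain ⟨n, hn⟩ := IsIntegrallyClosed.isIntegral_iff.mp h2
    exact ⟨n, by rw [← hn]; simp⟩
  obtain ⟨n, hn⟩ := hratint N (htN ▸ ((hwint.mul hσwint).pow 2))
  have htN' : (w' * σ w') ^ 2 = ((N⁻¹ : ℚ) : K) := by
    have h1 : ((N : ℚ) : K) * (w' * σ w') ^ 2 = 1 := by
      rw [← htN, ← mul_pow, htt', one_pow]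
    rw [eq_comm, Rat.cast_inv]
    exact (eq_inv_of_mul_eq_one_left (by rw [mul_comm] at h1; exact h1)).symm
  obtain ⟨m, hm⟩ := hratint N⁻¹ (htN' ▸ ((hw'int.mul hσw'int).pow 2))
  have hnm : n * m = 1 := by
    have h1 : ((n * m : ℤ) : ℚ) = 1 := by
      push_cast
      rw [hn, hm]
      field_simp
    exact_mod_cast h1
  have hNr : ((N : ℚ) : ℝ) = (τ₀ (w * σ w)) ^ 2 := by
    rw [← map_pow, htN, map_ratCast]
  have hNpos : (0 : ℚ) < N := by
    have h2 : τ₀ (w * σ w) ≠ 0 := by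
      simpa using ht0
    have h3 : (0:ℝ) < ((N : ℚ) : ℝ) := by
      rw [hNr]
      positivity
    exact_mod_cast h3
  have hN1 : N = 1 := by
    rcases Int.isUnit_iff.mp (IsUnit.of_mul_eq_one (a := n) m hnm) with h | h <;>
        rw [h] at hn <;> push_cast at hn
    · exact hn.symm
    · linarith
  -- the fundamental real quantities
  have hEF : (τ₀ w) ^ 2 * (τ₁ w) ^ 2 = 1 := by
    have h1 : τ₁ w = τ₀ (σ w) := rfl
    have h2 : ((N : ℚ) : ℝ) = 1 := by rw [hN1]; norm_num
    rw [h1, ← mul_pow, ← map_mul, ← hNr, h2]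
  have hE1 : 1 < (τ₀ w) ^ 2 := by nlinarith [hu1]
  have hE0 : (0:ℝ) < (τ₀ w) ^ 2 := by linarith
  have hP : 0 < τ₀ a := ha τ₀
  have hQ : 0 < τ₁ a := ha τ₁
  have hu₂r : (0:ℝ) < (u₂ : ℝ) := by exact_mod_cast hu₂
  have hr2 : (τ₀ sq) ^ 2 = ((d : ℤ) : ℝ) := by
    rw [← map_pow, hsq, map_intCast]
  have hEco : (τ₀ w) ^ 2 = (u₁ : ℝ) + (u₂ : ℝ) * τ₀ sq := by
    rw [← map_pow, husq, map_add, map_mul, map_ratCast, map_ratCast]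
  have hFco : (τ₁ w) ^ 2 = (u₁ : ℝ) - (u₂ : ℝ) * τ₀ sq := by
    rw [← map_pow, husq, map_add, map_mul, map_ratCast, map_ratCast, hτ₁sq]
    ring
  have hFlt : (τ₁ w) ^ 2 < 1 := by nlinarith [hEF, hE1]
  have hF0 : (0:ℝ) < (τ₁ w) ^ 2 := by nlinarith [hEF, hE1]
  have hrpos : (0:ℝ) < τ₀ sq := by
    by_contra hc
    push_neg at hc
    have h1 : (τ₀ w) ^ 2 - (τ₁ w) ^ 2 = 2 * (u₂ : ℝ) * τ₀ sq := by
      rw [hEco, hFco]; ring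
    nlinarith [hu₂r, hFlt, hE1]
  have hPco : τ₀ a = (a₁ : ℝ) + (a₂ : ℝ) * τ₀ sq := by
    rw [haK, map_add, map_mul, map_ratCast, map_ratCast]
  have hQco : τ₁ a = (a₁ : ℝ) - (a₂ : ℝ) * τ₀ sq := by
    rw [haK, map_add, map_mul, map_ratCast, map_ratCast, hτ₁sq]
    ring
  have ha₁ : (0:ℝ) < (a₁ : ℝ) := by nlinarith [hP, hQ, hPco, hQco]
  have e1 : 2 * (a₁ : ℝ) = τ₀ a + τ₁ a := by rw [hPco, hQco]; ring
  have e2 : 2 * ((a₂ : ℝ) * τ₀ sq) = τ₀ a - τ₁ a := by rw [hPco, hQco]; ring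
  have e3 : 2 * (u₁ : ℝ) = (τ₀ w) ^ 2 + (τ₁ w) ^ 2 := by rw [hEco, hFco]; ring
  have e4 : 2 * ((u₂ : ℝ) * τ₀ sq) = (τ₀ w) ^ 2 - (τ₁ w) ^ 2 := by rw [hEco, hFco]; ring
  have k1 : (a₂ : ℝ) * (((d : ℤ) : ℝ) * (u₂ : ℝ)) * 4 = (τ₀ a - τ₁ a) * ((τ₀ w) ^ 2 - (τ₁ w) ^ 2) := by
    rw [← e2, ← e4, ← hr2]; ring
  have k2 : ((u₁ : ℝ) - 1) * (a₁ : ℝ) * 4 = (τ₀ a + τ₁ a) * ((τ₀ w) ^ 2 + (τ₁ w) ^ 2 - 2) := by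
    rw [← e1, ← e3]; ring
  have hdu₂r : (0:ℝ) < ((d : ℤ) : ℝ) * (u₂ : ℝ) := by nlinarith [hr2, hrpos, hu₂r]
  -- the main equivalence on the right-hand side
  have hBiff : (|a₂| / a₁ ≤ (u₁ - 1) / ((d : ℚ) * u₂)) ↔
      (τ₁ a ≤ τ₀ a * (τ₀ w) ^ 2 ∧ τ₀ a ≤ τ₁ a * (τ₀ w) ^ 2) := by
    rw [← Rat.cast_le (K := ℝ)]
    push_cast
    rw [div_le_div_iff₀ ha₁ hdu₂r]
    rw [show |(a₂ : ℝ)| * (((d : ℤ) : ℝ) * (u₂ : ℝ)) = |(a₂ : ℝ) * (((d : ℤ) : ℝ) * (u₂ : ℝ))| from by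
      rw [abs_mul, abs_of_pos hdu₂r], abs_le]
    constructor
    · rintro ⟨hneg, hpos⟩
      constructor
      · have h' : (τ₁ a - τ₀ a) * ((τ₀ w) ^ 2 - (τ₁ w) ^ 2) ≤
            (τ₁ a + τ₀ a) * ((τ₀ w) ^ 2 + (τ₁ w) ^ 2 - 2) := by nlinarith [k1, k2, hneg]
        exact (auxIff (τ₁ a) (τ₀ a) ((τ₀ w) ^ 2) ((τ₁ w) ^ 2) hQ hP hE1 hEF).mp h'
      · have h' : (τ₀ a - τ₁ a) * ((τ₀ w) ^ 2 - (τ₁ w) ^ 2) ≤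
            (τ₀ a + τ₁ a) * ((τ₀ w) ^ 2 + (τ₁ w) ^ 2 - 2) := by nlinarith [k1, k2, hpos]
        exact (auxIff (τ₀ a) (τ₁ a) ((τ₀ w) ^ 2) ((τ₁ w) ^ 2) hP hQ hE1 hEF).mp h'
    · rintro ⟨hc1, hc2⟩
      have h1' := (auxIff (τ₁ a) (τ₀ a) ((τ₀ w) ^ 2) ((τ₁ w) ^ 2) hQ hP hE1 hEF).mpr hc1
      have h2' := (auxIff (τ₀ a) (τ₁ a) ((τ₀ w) ^ 2) ((τ₁ w) ^ 2) hP hQ hE1 hEF).mpr hc2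
      constructor
      · nlinarith [k1, k2, h1']
      · nlinarith [k1, k2, h2']
  -- the trace condition, over ℝ
  have hcond : ∀ v : (𝓞 K)ˣ,
      ((Algebra.trace ℚ K a ≤ Algebra.trace ℚ K (a * ((v : 𝓞 K) : K) ^ 2)) ↔
        τ₀ a + τ₁ a ≤ τ₀ a * (τ₀ ((v : 𝓞 K) : K)) ^ 2 + τ₁ a * (τ₁ ((v : 𝓞 K) : K)) ^ 2) := by
    intro v
    rw [← Rat.cast_le (K := ℝ), htrace, htrace, map_mul, map_mul, map_pow, map_pow]
  constructor
  · intro h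
    have hA1 := (hcond u).mp (h u)
    have hA2 := (hcond u⁻¹).mp (h u⁻¹)
    have hτmul : τ₀ w * τ₀ w' = 1 := by rw [← map_mul, hww', map_one]
    have hτmul' : τ₁ w * τ₁ w' = 1 := by rw [← map_mul, hww', map_one]
    have hEw' : (τ₀ w) ^ 2 * (τ₀ w') ^ 2 = 1 := by rw [← mul_pow, hτmul, one_pow]
    have hFw' : (τ₁ w) ^ 2 * (τ₁ w') ^ 2 = 1 := by rw [← mul_pow, hτmul', one_pow]
    have hx1 : (τ₀ w') ^ 2 = (τ₁ w) ^ 2 :=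
      mul_left_cancel₀ (ne_of_gt hE0) (hEw'.trans hEF.symm)
    have hx2 : (τ₁ w') ^ 2 = (τ₀ w) ^ 2 :=
      mul_left_cancel₀ (ne_of_gt hF0) (hFw'.trans (by rw [mul_comm] at hEF; exact hEF.symm))
    rw [hx1, hx2] at hA2
    have h1' := auxDerive (τ₀ a) (τ₁ a) ((τ₀ w) ^ 2) ((τ₁ w) ^ 2) hP hQ hE1 hEF hA1
    have h2' := auxDerive (τ₁ a) (τ₀ a) ((τ₀ w) ^ 2) ((τ₁ w) ^ 2) hQ hP hE1 hEF
      (by linarith [hA2])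
    exact hBiff.mpr ⟨h1', h2'⟩
  · intro hB v
    obtain ⟨hq1, hq2⟩ := hBiff.mp hB
    rw [hcond v]
    have hFeq : (τ₁ w) ^ 2 = ((τ₀ w) ^ 2)⁻¹ := by
      field_simp
      linarith [hEF]
    obtain ⟨k, hk | hk⟩ := hfund v
    · have c1 : (τ₀ ((v : 𝓞 K) : K)) ^ 2 = ((τ₀ w) ^ 2) ^ k := by
        rw [hk, map_zpow₀, pow_two, pow_two, ← mul_zpow]
      have c2 : (τ₁ ((v : 𝓞 K) : K)) ^ 2 = ((τ₀ w) ^ 2) ^ (-k) := by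
        rw [hk, map_zpow₀, pow_two, ← mul_zpow, ← pow_two, hFeq, inv_zpow, ← zpow_neg]
      rw [c1, c2]
      exact auxKey2 (τ₀ a) (τ₁ a) ((τ₀ w) ^ 2) hP hQ hE1 hq1 hq2 k
    · have c1 : (τ₀ ((v : 𝓞 K) : K)) ^ 2 = ((τ₀ w) ^ 2) ^ k := by
        rw [hk, map_neg, neg_sq, map_zpow₀, pow_two, pow_two, ← mul_zpow]
      have c2 : (τ₁ ((v : 𝓞 K) : K)) ^ 2 = ((τ₀ w) ^ 2) ^ (-k) := by
        rw [hk, map_neg, neg_sq, map_zpow₀, pow_two, ← mul_zpow, ← pow_two, hFeq, inv_zpow, ← zpow_neg]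
      rw [c1, c2]
      exact auxKey2 (τ₀ a) (τ₁ a) ((τ₀ w) ^ 2) hP hQ hE1 hq1 hq2 k
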